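/- arXiv:1502.02404 — 4 statements merged into one kernel-verified Lean document; each statement's English description precedes it below -/
import Mathlib

section
/- Let k ≥ 2 and let F be a finite rooted forest whose set V of nodes satisfies |V| < k. Let M : V → Finset ℕ assign to each node a finite set of positive natural numbers such that the sets M(v) (v ∈ V) are pairwise disjoint, |M(r)| = 1 for every root r, and |M(v)| = ∑_{j ∈ M(p)} k^j for every non-root v with parent p. Define M_0 = ⋃_{v∈V} M(v) and, recursively, M_{i+1} = { j > 0 : the j-th base-k digit of |M_i| is nonzero }. Then for every i ∈ ℕ, M_i = ⋃ { M(v) : v ∈ V, height(v) ≥ i }, where height(v) is the height of the subtree rooted at v (leaves have height 0). -/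
private lemma geo_aux (k n : ℕ) (hk : 1 ≤ k) :
    ∑ j ∈ Finset.range n, (k - 1) * k ^ j = k ^ n - 1 := by
  induction n with
  | zero => simp
  | succ n ih =>
    rw [Finset.sum_range_succ, ih]
    have h1 : 1 ≤ k ^ n := Nat.one_le_pow _ _ (by omega)
    have h2 : k ^ (n + 1) = k * k ^ n := by ring
    have h3 : (k - 1) * k ^ n = k * k ^ n - k ^ n := by
      rw [Nat.sub_mul, one_mul]
    have h4 : k ^ n ≤ k * k ^ n := Nat.le_mul_of_pos_left _ (by omega)
    omega

private lemma digit_sum (k : ℕ) (hk : 2 ≤ k) (T : Finset ℕ) (c : ℕ → ℕ)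
    (hc : ∀ j ∈ T, c j < k) (j0 : ℕ) :
    (∑ j ∈ T, c j * k ^ j) / k ^ j0 % k = if j0 ∈ T then c j0 else 0 := by
  set f : ℕ → ℕ := fun j => c j * k ^ j with hf
  have hsplit1 := Finset.sum_filter_add_sum_filter_not T (fun j => j < j0) f
  have hsplit2 := Finset.sum_filter_add_sum_filter_not
    (T.filter fun j => ¬ j < j0) (fun j => j = j0) f
  set A := ∑ j ∈ T.filter (fun j => j < j0), f j with hA
  set B := ∑ j ∈ (T.filter fun j => ¬ j < j0).filter (fun j => j = j0), f j with hB
  set C := ∑ j ∈ (T.filter fun j => ¬ j < j0).filter (fun j => ¬ j = j0), f j with hC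
  have hBval : B = (if j0 ∈ T then c j0 else 0) * k ^ j0 := by
    rw [hB, Finset.filter_filter]
    have : T.filter (fun j => ¬ j < j0 ∧ j = j0) = T.filter (fun j => j = j0) := by
      apply Finset.filter_congr
      intro j hj
      constructor
      · rintro ⟨-, h⟩; exact h
      · rintro rfl; exact ⟨lt_irrefl _, rfl⟩
    rw [this, Finset.filter_eq']
    split_ifs with h
    · simp [f]
    · simp
  -- A is small
  have hAlt : A < k ^ j0 := by
    have h1 : A ≤ ∑ j ∈ T.filter (fun j => j < j0), (k - 1) * k ^ j := by
      apply Finset.sum_le_sum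
      intro j hj
      have := hc j (Finset.mem_filter.mp hj).1
      exact Nat.mul_le_mul_right _ (by omega)
    have h2 : ∑ j ∈ T.filter (fun j => j < j0), (k - 1) * k ^ j
        ≤ ∑ j ∈ Finset.range j0, (k - 1) * k ^ j := by
      apply Finset.sum_le_sum_of_subset
      intro j hj
      exact Finset.mem_range.mpr (Finset.mem_filter.mp hj).2
    have h3 := geo_aux k j0 (by omega)
    have h4 : 1 ≤ k ^ j0 := Nat.one_le_pow _ _ (by omega)
    omega
  -- C is divisible by k^(j0+1)
  have hCdvd : k ^ (j0 + 1) ∣ C := by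
    apply Finset.dvd_sum
    intro j hj
    have hj' := Finset.mem_filter.mp hj
    have hj'' := Finset.mem_filter.mp hj'.1
    have hlt : j0 + 1 ≤ j := by omega
    exact Dvd.dvd.mul_left (pow_dvd_pow k hlt) _
  obtain ⟨D, hD⟩ := hCdvd
  set b := if j0 ∈ T then c j0 else 0 with hb
  have hblt : b < k := by
    rw [hb]; split_ifs with h
    · exact hc _ h
    · omega
  have hsum : ∑ j ∈ T, f j = A + (b + k * D) * k ^ j0 := by
    rw [← hsplit1, ← hsplit2, hBval, hD]
    ring
  rw [hsum]
  have hkpos : 0 < k ^ j0 := Nat.pow_pos (by omega : 0 < k)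
  rw [Nat.add_mul_div_right _ _ hkpos, Nat.div_eq_of_lt hAlt, zero_add,
    Nat.add_mul_mod_self_left, Nat.mod_eq_of_lt hblt]

/-- Forest lemma (abstract core of the paper's Lemma on `M_i(e)`).  `V` is the
node set of a finite rooted forest given by a `parent` function, `ht v` is the
height of the subtree rooted at `v` (leaves have height `0`, so
`ht v = sup over children w of (ht w + 1)`).  If `|V| < k` with `k ≥ 2`, and
`M : V → Finset ℕ` assigns pairwise disjoint finite sets of positive naturals
with `|M r| = 1` for roots and `|M v| = ∑ j ∈ M p, k ^ j` when `p` is the parent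
of `v`, then the recursion `M₀ = ⋃ v, M v`,
`M_{i+1} = { j > 0 : j-th base-k digit of |M_i| ≠ 0 }` satisfies
`M_i = ⋃ { M v : ht v ≥ i }` for all `i`. -/
theorem forest_Mi (k : ℕ) (hk : 2 ≤ k) (V : Type) [Fintype V] [DecidableEq V]
    (parent : V → Option V) (ht : V → ℕ)
    (hht : ∀ v, ht v =
      (Finset.univ.filter (fun w => parent w = some v)).sup (fun w => ht w + 1))
    (hcard : Fintype.card V < k)
    (M : V → Finset ℕ)
    (hpos : ∀ v, ∀ j ∈ M v, 0 < j)
    (hdisj : ∀ v w, v ≠ w → Disjoint (M v) (M w))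
    (hroot : ∀ r, parent r = none → (M r).card = 1)
    (hchild : ∀ v p, parent v = some p → (M v).card = ∑ j ∈ M p, k ^ j)
    (Mi : ℕ → Finset ℕ)
    (hM0 : Mi 0 = Finset.univ.biUnion M)
    (hMi : ∀ i j, j ∈ Mi (i + 1) ↔ 0 < j ∧ (Mi i).card / k ^ j % k ≠ 0) :
    ∀ i, Mi i = (Finset.univ.filter (fun v => i ≤ ht v)).biUnion M := by
  intro i
  induction i with
  | zero =>
    rw [hM0]
    congr 1
    exact (Finset.filter_true_of_mem (fun v _ => Nat.zero_le _)).symm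
  | succ i ih =>
    classical
    set g : V → Finset ℕ := fun v => (parent v).elim {0} M with hg
    set T0 : Finset ℕ := insert 0 (Finset.univ.biUnion M) with hT0
    set S : Finset V := Finset.univ.filter (fun v => i ≤ ht v) with hS
    have hgsub : ∀ v, g v ⊆ T0 := by
      intro v j hj
      have hj' : j ∈ (parent v).elim {0} M := hj
      cases hp : parent v with
      | none =>
        rw [hp, Option.elim_none, Finset.mem_singleton] at hj'
        subst hj'
        exact Finset.mem_insert_self _ _
      | some p =>
        rw [hp, Option.elim_some] at hj'
        exact Finset.mem_insert_of_mem (Finset.mem_biUnion.mpr ⟨p, Finset.mem_univ _, hj'⟩)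
    have hMcard : ∀ v, (M v).card = ∑ j ∈ g v, k ^ j := by
      intro v
      show (M v).card = ∑ j ∈ (parent v).elim {0} M, k ^ j
      cases hp : parent v with
      | none => rw [Option.elim_none]; simp [hroot v hp]
      | some p => rw [Option.elim_some]; exact hchild v p hp
    have hcardMi : (Mi i).card = ∑ v ∈ S, (M v).card := by
      rw [ih]
      exact Finset.card_biUnion (fun v _ w _ hvw => hdisj v w hvw)
    have hN : (Mi i).card
        = ∑ j ∈ T0, (S.filter (fun v => j ∈ g v)).card * k ^ j := by
      rw [hcardMi]
      calc ∑ v ∈ S, (M v).card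
          = ∑ v ∈ S, ∑ j ∈ T0, (if j ∈ g v then k ^ j else 0) := by
            refine Finset.sum_congr rfl fun v _ => ?_
            rw [hMcard v, Finset.sum_ite_mem, Finset.inter_eq_right.mpr (hgsub v)]
        _ = ∑ j ∈ T0, ∑ v ∈ S, (if j ∈ g v then k ^ j else 0) := Finset.sum_comm
        _ = ∑ j ∈ T0, (S.filter (fun v => j ∈ g v)).card * k ^ j := by
            refine Finset.sum_congr rfl fun j _ => ?_
            rw [← Finset.sum_filter, Finset.sum_const, smul_eq_mul]
    have hdig : ∀ j, (Mi i).card / k ^ j % k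
        = if j ∈ T0 then (S.filter (fun v => j ∈ g v)).card else 0 := by
      intro j
      rw [hN]
      refine digit_sum k hk T0 _ (fun j _ => ?_) j
      calc (S.filter (fun v => j ∈ g v)).card
          ≤ S.card := Finset.card_filter_le _ _
        _ ≤ Fintype.card V := Finset.card_le_univ _
        _ < k := hcard
    ext j
    rw [hMi i j, hdig j]
    simp only [Finset.mem_biUnion, Finset.mem_filter, Finset.mem_univ, true_and]
    constructor
    · rintro ⟨hj, hne⟩
      split_ifs at hne with hjT0
      · have hcne : (S.filter (fun v => j ∈ g v)).Nonempty :=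
          Finset.card_pos.mp (Nat.pos_of_ne_zero hne)
        obtain ⟨v, hv⟩ := hcne
        rw [Finset.mem_filter] at hv
        obtain ⟨hvS, hjg⟩ := hv
        rw [hS, Finset.mem_filter] at hvS
        have hjg' : j ∈ (parent v).elim {0} M := hjg
        cases hp : parent v with
        | none =>
          rw [hp, Option.elim_none, Finset.mem_singleton] at hjg'
          omega
        | some p =>
          rw [hp, Option.elim_some] at hjg'
          rename_i hjg
          have hjg := hjg' 
          refine ⟨p, ?_, hjg⟩
          rw [hht p]
          have hvmem : v ∈ Finset.univ.filter (fun w => parent w = some p) := by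
            simp [hp]
          calc i + 1 ≤ ht v + 1 := by omega
            _ ≤ _ := Finset.le_sup (f := fun w => ht w + 1) hvmem
      · exact absurd rfl hne
    · rintro ⟨w, hw, hjw⟩
      have hj : 0 < j := hpos w j hjw
      refine ⟨hj, ?_⟩
      have hjT0 : j ∈ T0 :=
        Finset.mem_insert_of_mem (Finset.mem_biUnion.mpr ⟨w, Finset.mem_univ _, hjw⟩)
      rw [if_pos hjT0]
      rw [hht w] at hw
      have : ∃ v ∈ Finset.univ.filter (fun x => parent x = some w), i + 1 ≤ ht v + 1 := by
        rw [← Finset.le_sup_iff]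
        · exact hw
        · exact Nat.succ_pos i
      obtain ⟨v, hvmem, hvht⟩ := this
      rw [Finset.mem_filter] at hvmem
      apply Finset.card_ne_zero_of_mem (a := v)
      rw [Finset.mem_filter, hS, Finset.mem_filter]
      refine ⟨⟨Finset.mem_univ _, by omega⟩, ?_⟩
      show j ∈ (parent v).elim {0} M
      rw [hvmem.2, Option.elim_some]
      exact hjw
end

section
/- Under the hypotheses of the forest lemma (finite rooted forest F with |V| < k for k ≥ 2, pairwise disjoint sets M(v) of positive naturals with |M(r)| = 1 for roots and |M(v)| = ∑_{j∈M(p)} k^j for v with parent p, M_0 = ⋃_v M(v), M_{i+1} = positive positions of nonzero base-k digits of |M_i|), one has: (a) M_{i+1} ⊆ M_i for every i; (b) |M_i| mod k equals the number of roots r of F with height(r) ≥ i; and (c) if every node of F has height ≤ i, then M_{i+1} = ∅. -/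
lemma geom_aux (k t : ℕ) (hk : 1 ≤ k) :
    ∑ j ∈ Finset.range t, (k - 1) * k ^ j = k ^ t - 1 := by
  induction t with
  | zero => simp
  | succ t ih =>
    rw [Finset.sum_range_succ, ih, pow_succ]
    have h1 : 1 ≤ k ^ t := Nat.one_le_pow _ _ hk
    have h2 : (k - 1) * k ^ t = k * k ^ t - k ^ t := by
      rw [Nat.sub_mul, one_mul]
    have h3 : k ^ t ≤ k * k ^ t := Nat.le_mul_of_pos_left _ (by omega)
    have h4 : k ^ t * k = k * k ^ t := mul_comm _ _
    omega

lemma digit_aux (k : ℕ) (hk : 2 ≤ k) (S : Finset ℕ) (w : ℕ → ℕ)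
    (hw : ∀ j ∈ S, w j < k) (t : ℕ) :
    (∑ j ∈ S, w j * k ^ j) / k ^ t % k = if t ∈ S then w t else 0 := by
  classical
  have hsplit : ∑ j ∈ S, w j * k ^ j =
      ∑ j ∈ S.filter (fun j => j < t), w j * k ^ j
      + ∑ j ∈ S.filter (fun j => j = t), w j * k ^ j
      + ∑ j ∈ S.filter (fun j => t < j), w j * k ^ j := by
    rw [← Finset.sum_filter_add_sum_filter_not S (fun j => j < t), add_assoc]
    congr 1
    rw [← Finset.sum_filter_add_sum_filter_not (S.filter (fun j => ¬ j < t))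
      (fun j => j = t), Finset.filter_filter, Finset.filter_filter]
    congr 1
    · exact Finset.sum_congr (Finset.filter_congr (by intro x _; constructor <;> omega)) (fun _ _ => rfl)
    · exact Finset.sum_congr (Finset.filter_congr (by intro x _; constructor <;> omega)) (fun _ _ => rfl)
  have hA : ∑ j ∈ S.filter (fun j => j < t), w j * k ^ j < k ^ t := by
    have h1 : ∑ j ∈ S.filter (fun j => j < t), w j * k ^ j
        ≤ ∑ j ∈ S.filter (fun j => j < t), (k - 1) * k ^ j := by
      apply Finset.sum_le_sum
      intro j hj
      have := hw j (Finset.mem_filter.mp hj).1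
      exact Nat.mul_le_mul_right _ (by omega)
    have h2 : ∑ j ∈ S.filter (fun j => j < t), (k - 1) * k ^ j
        ≤ ∑ j ∈ Finset.range t, (k - 1) * k ^ j := by
      apply Finset.sum_le_sum_of_subset
      intro j hj
      exact Finset.mem_range.mpr (Finset.mem_filter.mp hj).2
    rw [geom_aux k t (by omega)] at h2
    have h3 : 1 ≤ k ^ t := Nat.one_le_pow _ _ (by omega)
    omega
  have hB : ∑ j ∈ S.filter (fun j => j = t), w j * k ^ j
      = (if t ∈ S then w t else 0) * k ^ t := by
    rw [Finset.filter_eq' S t]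
    split <;> simp
  have hC : ∑ j ∈ S.filter (fun j => t < j), w j * k ^ j
      = k ^ (t + 1) * ∑ j ∈ S.filter (fun j => t < j), w j * k ^ (j - t - 1) := by
    rw [Finset.mul_sum]
    apply Finset.sum_congr rfl
    intro j hj
    have hj' : t < j := (Finset.mem_filter.mp hj).2
    have : k ^ j = k ^ (t + 1) * k ^ (j - t - 1) := by
      rw [← pow_add]; congr 1; omega
    rw [this]; ring
  set C := ∑ j ∈ S.filter (fun j => t < j), w j * k ^ (j - t - 1) with hCdef
  rw [hsplit, hB, hC]
  have hre : ∑ j ∈ S.filter (fun j => j < t), w j * k ^ j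
      + (if t ∈ S then w t else 0) * k ^ t + k ^ (t + 1) * C
      = ∑ j ∈ S.filter (fun j => j < t), w j * k ^ j
      + k ^ t * ((if t ∈ S then w t else 0) + k * C) := by
    rw [pow_succ]; ring
  rw [hre, Nat.add_mul_div_left _ _ (pow_pos (by omega : 0 < k) t),
    Nat.div_eq_of_lt hA, zero_add, Nat.add_mul_mod_self_left]
  split
  · exact Nat.mod_eq_of_lt (hw t (by assumption))
  · exact Nat.zero_mod k


/-- Corollaries of the forest lemma: under the hypotheses modelling a
`k`-injective pseudo-experiment on a finite rooted forest, the sets `M_i` are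
decreasing, `|M_i| mod k` counts the roots of height `≥ i`, and the recursion
terminates at the depth of the forest. -/
theorem forest_Mi_corollaries (k : ℕ) (hk : 2 ≤ k) (V : Type) [Fintype V] [DecidableEq V]
    (parent : V → Option V) (ht : V → ℕ)
    (hht : ∀ v, ht v =
      (Finset.univ.filter (fun w => parent w = some v)).sup (fun w => ht w + 1))
    (hcard : Fintype.card V < k)
    (M : V → Finset ℕ)
    (hpos : ∀ v, ∀ j ∈ M v, 0 < j)
    (hdisj : ∀ v w, v ≠ w → Disjoint (M v) (M w))
    (hroot : ∀ r, parent r = none → (M r).card = 1)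
    (hchild : ∀ v p, parent v = some p → (M v).card = ∑ j ∈ M p, k ^ j)
    (Mi : ℕ → Finset ℕ)
    (hM0 : Mi 0 = Finset.univ.biUnion M)
    (hMi : ∀ i j, j ∈ Mi (i + 1) ↔ 0 < j ∧ (Mi i).card / k ^ j % k ≠ 0) :
    (∀ i, Mi (i + 1) ⊆ Mi i) ∧
    (∀ i, (Mi i).card % k =
      (Finset.univ.filter (fun r => parent r = none ∧ i ≤ ht r)).card) ∧
    (∀ i, (∀ v, ht v ≤ i) → Mi (i + 1) = ∅) := by
  classical
  -- the set of positions contributed by the parent of `v`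
  set pm : V → Finset ℕ := fun v => ((parent v).map M).getD ∅ with hpm
  have hpm_none : ∀ v, parent v = none → pm v = ∅ := by
    intro v h; simp [hpm, h]
  have hpm_some : ∀ v p, parent v = some p → pm v = M p := by
    intro v p h; simp [hpm, h]
  set T : Finset ℕ := Finset.univ.biUnion pm with hT
  set S : Finset ℕ := insert 0 T with hS
  have hTpos : ∀ j ∈ T, 0 < j := by
    intro j hj
    obtain ⟨v, -, hv⟩ := Finset.mem_biUnion.mp hj
    rcases h : parent v with - | p
    · rw [hpm_none v h] at hv; simp at hv
    · rw [hpm_some v p h] at hv; exact hpos p j hv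
  have h0T : 0 ∉ T := fun h => absurd (hTpos 0 h) (by omega)
  set F : ℕ → Finset V := fun i => Finset.univ.filter (fun v => i ≤ ht v) with hF
  set d : ℕ → ℕ → ℕ := fun i j => ((F i).filter (fun v => j ∈ pm v)).card with hd
  set w : ℕ → ℕ → ℕ := fun i j =>
    if j = 0 then ((F i).filter (fun v => parent v = none)).card else d i j with hw
  have hwlt : ∀ i, ∀ j ∈ S, w i j < k := by
    intro i j _
    have h1 : ∀ (s : Finset V), s.card < k := fun s =>
      lt_of_le_of_lt (Finset.card_le_univ s) hcard
    by_cases h : j = 0 <;> simp [hw, hd, h, h1]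
  -- cardinality of M v, uniformly
  have hMcard : ∀ v, (M v).card
      = (if parent v = none then 1 else 0) + ∑ j ∈ pm v, k ^ j := by
    intro v
    rcases h : parent v with - | p
    · rw [hpm_none v h]; simp [hroot v h]
    · rw [hpm_some v p h]; simp [hchild v p h, h]
  -- the card of biUnion over F i as a digit expansion
  have hkey : ∀ i, ((F i).biUnion M).card = ∑ j ∈ S, w i j * k ^ j := by
    intro i
    rw [Finset.card_biUnion (fun x _ y _ hxy => hdisj x y hxy)]
    have h1 : ∑ v ∈ F i, (M v).card
        = (∑ v ∈ F i, if parent v = none then 1 else 0)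
          + ∑ v ∈ F i, ∑ j ∈ pm v, k ^ j := by
      rw [← Finset.sum_add_distrib]
      exact Finset.sum_congr rfl (fun v _ => hMcard v)
    rw [h1]
    have h2 : (∑ v ∈ F i, if parent v = none then 1 else 0)
        = ((F i).filter (fun v => parent v = none)).card := by
      rw [Finset.card_filter]
    have h3 : ∑ v ∈ F i, ∑ j ∈ pm v, k ^ j = ∑ j ∈ T, d i j * k ^ j := by
      have hsub : ∀ v, pm v ⊆ T := fun v => fun j hj =>
        Finset.mem_biUnion.mpr ⟨v, Finset.mem_univ v, hj⟩
      have h4 : ∀ v, ∑ j ∈ pm v, k ^ j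
          = ∑ j ∈ T, if j ∈ pm v then k ^ j else 0 := by
        intro v
        rw [Finset.sum_ite_mem, Finset.inter_eq_right.mpr (hsub v)]
      calc ∑ v ∈ F i, ∑ j ∈ pm v, k ^ j
          = ∑ v ∈ F i, ∑ j ∈ T, if j ∈ pm v then k ^ j else 0 :=
            Finset.sum_congr rfl (fun v _ => h4 v)
        _ = ∑ j ∈ T, ∑ v ∈ F i, if j ∈ pm v then k ^ j else 0 :=
            Finset.sum_comm
        _ = ∑ j ∈ T, d i j * k ^ j := by
            apply Finset.sum_congr rfl
            intro j _
            rw [Finset.sum_ite, Finset.sum_const_zero, add_zero,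
              Finset.sum_const, smul_eq_mul]
    rw [h2, h3, hS, Finset.sum_insert h0T]
    have h5 : w i 0 * k ^ 0 = ((F i).filter (fun v => parent v = none)).card := by
      simp [hw]
    rw [h5]
    congr 1
    apply Finset.sum_congr rfl
    intro j hj
    have : j ≠ 0 := fun h => h0T (h ▸ hj)
    simp [hw, this]
  -- height facts
  have hup : ∀ v p, parent v = some p → ht v + 1 ≤ ht p := by
    intro v p h
    rw [hht p]
    exact Finset.le_sup (f := fun w => ht w + 1)
      (Finset.mem_filter.mpr ⟨Finset.mem_univ v, h⟩)
  have hdown : ∀ p i, i + 1 ≤ ht p → ∃ v, parent v = some p ∧ i ≤ ht v := by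
    intro p i hp
    rw [hht p] at hp
    obtain ⟨v, hv, hle⟩ := (Finset.le_sup_iff (by omega : (0:ℕ) < i + 1)).mp hp
    exact ⟨v, (Finset.mem_filter.mp hv).2, by omega⟩
  -- the main invariant
  have inv : ∀ i, Mi i = (F i).biUnion M := by
    intro i
    induction i with
    | zero =>
      rw [hM0]
      congr 1
      simp [hF]
    | succ i ih =>
      ext j
      rw [hMi i j, ih, hkey i, digit_aux k hk S (w i) (hwlt i) j]
      simp only [Finset.mem_biUnion]
      constructor
      · rintro ⟨hj0, hne⟩
        have hjS : j ∈ S := by by_contra h; simp [h] at hne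
        rw [if_pos hjS] at hne
        have hjT : j ∈ T := by
          rcases Finset.mem_insert.mp hjS with h | h
          · omega
          · exact h
        have : j ≠ 0 := by omega
        rw [hw] at hne
        simp only [this, if_false] at hne
        have : ((F i).filter (fun v => j ∈ pm v)).Nonempty :=
          Finset.card_pos.mp (Nat.pos_of_ne_zero hne)
        obtain ⟨v, hv⟩ := this
        obtain ⟨hvF, hvpm⟩ := Finset.mem_filter.mp hv
        rcases h : parent v with - | p
        · rw [hpm_none v h] at hvpm; simp at hvpm
        · refine ⟨p, Finset.mem_filter.mpr ⟨Finset.mem_univ p, ?_⟩, ?_⟩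
          · have h1 : i ≤ ht v := (Finset.mem_filter.mp hvF).2
            have := hup v p h
            omega
          · rw [hpm_some v p h] at hvpm; exact hvpm
      · rintro ⟨p, hp, hjp⟩
        have hp1 : i + 1 ≤ ht p := (Finset.mem_filter.mp hp).2
        obtain ⟨v, hvp, hvht⟩ := hdown p i hp1
        have hvpm : j ∈ pm v := by rw [hpm_some v p hvp]; exact hjp
        have hjT : j ∈ T := Finset.mem_biUnion.mpr ⟨v, Finset.mem_univ v, hvpm⟩
        have hj0 : 0 < j := hTpos j hjT
        refine ⟨hj0, ?_⟩
        have hjS : j ∈ S := Finset.mem_insert_of_mem hjT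
        rw [if_pos hjS, hw]
        have hjne : j ≠ 0 := by omega
        simp only [hjne, if_false, hd]
        have : v ∈ (F i).filter (fun v => j ∈ pm v) :=
          Finset.mem_filter.mpr ⟨Finset.mem_filter.mpr ⟨Finset.mem_univ v, hvht⟩, hvpm⟩
        have := Finset.card_pos.mpr ⟨v, this⟩
        omega
  refine ⟨?_, ?_, ?_⟩
  · intro i
    rw [inv i, inv (i + 1)]
    apply Finset.biUnion_subset_biUnion_of_subset_left
    intro v hv
    have := (Finset.mem_filter.mp hv).2
    exact Finset.mem_filter.mpr ⟨Finset.mem_univ v, by omega⟩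
  · intro i
    have h0S : (0 : ℕ) ∈ S := Finset.mem_insert_self 0 T
    have := digit_aux k hk S (w i) (hwlt i) 0
    rw [pow_zero, Nat.div_one, if_pos h0S] at this
    rw [inv i, hkey i, this, hw]
    simp only [if_pos rfl]
    apply congrArg Finset.card
    ext v
    simp only [Finset.mem_filter, Finset.mem_univ, true_and, hF]
    tauto
  · intro i hle
    rw [inv (i + 1)]
    have : F (i + 1) = ∅ := by
      rw [hF]
      apply Finset.filter_false_of_mem
      intro v _
      have := hle v
      omega
    rw [this, Finset.biUnion_empty]
end

section
/- Under the hypotheses of the forest lemma (finite rooted forest F with node set V, |V| < k, k ≥ 2, pairwise disjoint finite sets M(v) ⊆ ℕ_{>0} with |M(r)| = 1 for roots and |M(v)| = ∑_{j∈M(p)} k^j when p is the parent of v; M_0 = ⋃_v M(v) and M_{i+1} = positive positions of nonzero base-k digits of |M_i|), define N_i = M_i \ M_{i+1}. Then N_i = ⋃ { M(v) : v ∈ V, height(v) = i }; in particular, for every j ∈ N_i there is a unique node v of height exactly i with j ∈ M(v). -/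
lemma forestNi_sum_pow_lt (k : ℕ) (hk : 2 ≤ k) (c : ℕ → ℕ) (hc : ∀ j, c j < k) (m : ℕ) :
    ∑ j ∈ Finset.range m, c j * k ^ j < k ^ m := by
  induction m with
  | zero => simp
  | succ m ih =>
    rw [Finset.sum_range_succ, pow_succ]
    have h1 : c m * k ^ m ≤ (k - 1) * k ^ m :=
      Nat.mul_le_mul_right _ (by have := hc m; omega)
    have h2 : k ^ m + (k - 1) * k ^ m = k ^ m * k := by
      have : 1 + (k - 1) = k := by omega
      calc k ^ m + (k - 1) * k ^ m = (1 + (k - 1)) * k ^ m := by ring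
        _ = k ^ m * k := by rw [this]; ring
    omega

lemma forestNi_digit (k : ℕ) (hk : 2 ≤ k) (c : ℕ → ℕ) (hc : ∀ j, c j < k) (m j : ℕ)
    (hj : j < m) :
    (∑ j' ∈ Finset.range m, c j' * k ^ j') / k ^ j % k = c j := by
  have hkpos : 0 < k ^ j := pow_pos (by omega) _
  have h1 : ∑ j' ∈ Finset.range m, c j' * k ^ j'
      = (∑ j' ∈ Finset.range j, c j' * k ^ j') + ∑ j' ∈ Finset.Ico j m, c j' * k ^ j' := by
    rw [Finset.range_eq_Ico, Finset.range_eq_Ico]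
    exact (Finset.sum_Ico_consecutive _ (Nat.zero_le j) (le_of_lt hj)).symm
  have h2 : ∑ j' ∈ Finset.Ico j m, c j' * k ^ j'
      = c j * k ^ j + ∑ j' ∈ Finset.Ico (j + 1) m, c j' * k ^ j' :=
    Finset.sum_eq_sum_Ico_succ_bot hj _
  have h3 : ∑ j' ∈ Finset.Ico (j + 1) m, c j' * k ^ j'
      = (∑ j' ∈ Finset.Ico (j + 1) m, c j' * k ^ (j' - (j + 1)) * k) * k ^ j := by
    rw [Finset.sum_mul]
    refine Finset.sum_congr rfl (fun x hx => ?_)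
    rw [Finset.mem_Ico] at hx
    rw [mul_assoc, mul_assoc, ← pow_succ', ← pow_add]
    congr 2
    omega
  set A := ∑ j' ∈ Finset.range j, c j' * k ^ j' with hA
  set B := ∑ j' ∈ Finset.Ico (j + 1) m, c j' * k ^ (j' - (j + 1)) * k with hB
  have hAlt : A < k ^ j := forestNi_sum_pow_lt k hk c hc j
  have hN : ∑ j' ∈ Finset.range m, c j' * k ^ j' = A + (c j + B) * k ^ j := by
    rw [h1, h2, h3]; ring
  rw [hN, Nat.add_mul_div_right _ _ hkpos, Nat.div_eq_of_lt hAlt, zero_add]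
  have hBk : B % k = 0 := by
    rw [hB]
    -- B is a multiple of k
    rw [← Finset.sum_mul, Nat.mul_mod_left]
  rw [Nat.add_mod, hBk, add_zero, Nat.mod_mod_of_dvd _ dvd_rfl]
  exact Nat.mod_eq_of_lt (hc j)

/-- Under the hypotheses of the forest lemma, `N_i = M_i \ M_{i+1}` is exactly
the union of the sets `M v` over nodes `v` of height exactly `i`; in particular
every `j ∈ N_i` lies in `M v` for a unique node `v` of height exactly `i`. -/
theorem forest_Ni (k : ℕ) (hk : 2 ≤ k) (V : Type) [Fintype V] [DecidableEq V]
    (parent : V → Option V) (ht : V → ℕ)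
    (hht : ∀ v, ht v =
      (Finset.univ.filter (fun w => parent w = some v)).sup (fun w => ht w + 1))
    (hcard : Fintype.card V < k)
    (M : V → Finset ℕ)
    (hpos : ∀ v, ∀ j ∈ M v, 0 < j)
    (hdisj : ∀ v w, v ≠ w → Disjoint (M v) (M w))
    (hroot : ∀ r, parent r = none → (M r).card = 1)
    (hchild : ∀ v p, parent v = some p → (M v).card = ∑ j ∈ M p, k ^ j)
    (Mi : ℕ → Finset ℕ)
    (hM0 : Mi 0 = Finset.univ.biUnion M)
    (hMi : ∀ i j, j ∈ Mi (i + 1) ↔ 0 < j ∧ (Mi i).card / k ^ j % k ≠ 0) :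
    ∀ i, Mi i \ Mi (i + 1) = (Finset.univ.filter (fun v => ht v = i)).biUnion M ∧
      ∀ j ∈ Mi i \ Mi (i + 1), ∃! v : V, ht v = i ∧ j ∈ M v := by
  -- parent increases height
  have hpar : ∀ v p, parent v = some p → ht v + 1 ≤ ht p := by
    intro v p h
    rw [hht p]
    exact Finset.le_sup (f := fun w => ht w + 1)
      (Finset.mem_filter.mpr ⟨Finset.mem_univ v, h⟩)
  -- a node of positive height has a child of height one less
  have hchildex : ∀ p, 0 < ht p → ∃ w, parent w = some p ∧ ht w + 1 = ht p := by
    intro p hp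
    have h := hht p
    rcases (Finset.univ.filter (fun w => parent w = some p)).eq_empty_or_nonempty with he | hne
    · rw [he] at h; simp at h; omega
    · obtain ⟨w, hw, hweq⟩ := Finset.exists_mem_eq_sup _ hne (fun w => ht w + 1)
      exact ⟨w, (Finset.mem_filter.mp hw).2, by omega⟩
  -- bound on all exponents
  set m : ℕ := (Finset.univ.biUnion M).sup id + 1 with hm_def
  have hm : ∀ v, ∀ j ∈ M v, j < m := by
    intro v j hj
    have : j ≤ (Finset.univ.biUnion M).sup id :=
      Finset.le_sup (f := id) (Finset.mem_biUnion.mpr ⟨v, Finset.mem_univ v, hj⟩)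
    omega
  -- the key invariant
  have key : ∀ i, Mi i = (Finset.univ.filter (fun v => i ≤ ht v)).biUnion M := by
    intro i
    induction i with
    | zero =>
      rw [hM0]
      congr 1
      exact (Finset.filter_true_of_mem (fun v _ => Nat.zero_le _)).symm
    | succ i ih =>
      set S : Finset V := Finset.univ.filter (fun v => i ≤ ht v) with hS_def
      set P : Finset V := Finset.univ.filter (fun v => i + 1 ≤ ht v) with hP_def
      set C : V → Finset V :=
        fun p => Finset.univ.filter (fun w => parent w = some p ∧ i ≤ ht w) with hC_def
      set R : ℕ := (Finset.univ.filter (fun v => i ≤ ht v ∧ parent v = none)).card with hR_def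
      set c : ℕ → ℕ := fun j => (if j = 0 then R else 0) +
        ∑ p ∈ P, (if j ∈ M p then (C p).card else 0) with hc_def
      -- each C p is nonempty for p ∈ P
      have hCne : ∀ p ∈ P, 0 < (C p).card := by
        intro p hp
        rw [hP_def, Finset.mem_filter] at hp
        obtain ⟨w, hw1, hw2⟩ := hchildex p (by omega)
        refine Finset.card_pos.mpr ⟨w, ?_⟩
        rw [hC_def]
        exact Finset.mem_filter.mpr ⟨Finset.mem_univ w, hw1, by omega⟩
      -- digits are < k
      have hclt : ∀ j, c j < k := by
        intro j
        simp only [hc_def]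
        rcases Nat.eq_zero_or_pos j with hj | hj
        · subst hj
          have hz : ∀ p ∈ P, (if (0:ℕ) ∈ M p then (C p).card else 0) = 0 := by
            intro p _
            have : (0:ℕ) ∉ M p := fun h => by have := hpos p 0 h; omega
            simp [this]
          rw [Finset.sum_congr rfl hz]
          simp only [if_pos rfl, Finset.sum_const_zero, add_zero]
          calc R ≤ Fintype.card V := by
                rw [hR_def, ← Finset.card_univ]; exact Finset.card_filter_le _ _
            _ < k := hcard
        · rw [if_neg (by omega), zero_add]
          -- at most one p ∈ P has j ∈ M p
          have hone : (P.filter (fun p => j ∈ M p)).card ≤ 1 := by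
            refine Finset.card_le_one.mpr (fun a ha b hb => ?_)
            rw [Finset.mem_filter] at ha hb
            by_contra hne
            exact (Finset.disjoint_left.mp (hdisj a b hne) ha.2) hb.2
          rw [← Finset.sum_filter]
          rcases (P.filter (fun p => j ∈ M p)).eq_empty_or_nonempty with he | hne
          · rw [he]; simp; omega
          · obtain ⟨p, hp⟩ := hne
            have : P.filter (fun p => j ∈ M p) = {p} := by
              apply Finset.eq_singleton_iff_unique_mem.mpr
              refine ⟨hp, fun x hx => ?_⟩
              have := Finset.card_le_one.mp hone x hx p hp
              exact this
            rw [this, Finset.sum_singleton]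
            calc (C p).card ≤ Fintype.card V := by
                  rw [hC_def, ← Finset.card_univ]; exact Finset.card_filter_le _ _
              _ < k := hcard
      -- the cardinality of Mi i as a sum over S
      have hcardS : (Mi i).card = ∑ v ∈ S, (M v).card := by
        rw [ih, hS_def]
        exact Finset.card_biUnion (fun x _ y _ hxy => hdisj x y hxy)
      -- split into roots and non-roots
      have hsplit : ∑ v ∈ S, (M v).card
          = R + ∑ p ∈ P, (C p).card * (∑ j ∈ M p, k ^ j) := by
        rw [← Finset.sum_filter_add_sum_filter_not S (fun v => parent v = none)]
        congr 1
        · -- roots contribute R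
          have : S.filter (fun v => parent v = none)
              = Finset.univ.filter (fun v => i ≤ ht v ∧ parent v = none) := by
            rw [hS_def, Finset.filter_filter]
          rw [this, hR_def]
          rw [Finset.sum_congr rfl (fun v hv => hroot v (Finset.mem_filter.mp hv).2.2)]
          simp [Finset.sum_const]
        · -- non-roots grouped by parent
          have hgrp : S.filter (fun v => ¬ parent v = none) = P.biUnion C := by
            ext v
            simp only [hS_def, hP_def, hC_def, Finset.mem_filter, Finset.mem_biUnion,
              Finset.mem_univ, true_and]
            constructor
            · rintro ⟨hv, hv2⟩
              cases hpv : parent v with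
              | none => exact absurd hpv hv2
              | some p =>
                exact ⟨p, by have := hpar v p hpv; omega, rfl, hv⟩
            · rintro ⟨p, hp, hpv, hv⟩
              cases hpv' : parent v with
              | none => rw [hpv'] at hpv; exact absurd hpv (by simp)
              | some q => exact ⟨hv, by simp⟩
          rw [hgrp, Finset.sum_biUnion]
          · refine Finset.sum_congr rfl (fun p hp => ?_)
            have hcong : ∀ w ∈ C p, (M w).card = ∑ j ∈ M p, k ^ j := by
              intro w hw
              rw [hC_def, Finset.mem_filter] at hw
              exact hchild w p hw.2.1
            rw [Finset.sum_congr rfl hcong, Finset.sum_const, smul_eq_mul]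
          · -- the C p are pairwise disjoint
            intro x _ y _ hxy
            simp only [Function.onFun]
            rw [Finset.disjoint_left]
            intro w hwx hwy
            rw [hC_def, Finset.mem_filter] at hwx hwy
            exact hxy (Option.some_injective _ (hwx.2.1.symm.trans hwy.2.1))
      -- the cardinality as a digit expansion
      have hN : (Mi i).card = ∑ j ∈ Finset.range m, c j * k ^ j := by
        rw [hcardS, hsplit, hc_def]
        simp only [add_mul, Finset.sum_add_distrib]
        congr 1
        · -- the R part
          rw [Finset.sum_eq_single 0]
          · simp
          · intro b _ hb; simp [hb]
          · intro h; exact absurd (Finset.mem_range.mpr (by omega)) h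
        · -- the P part
          symm
          simp only [Finset.sum_mul]
          rw [Finset.sum_comm]
          refine Finset.sum_congr rfl (fun p hp => ?_)
          have h1 : ∀ j ∈ Finset.range m,
              (if j ∈ M p then (C p).card else 0) * k ^ j
              = if j ∈ M p then (C p).card * k ^ j else 0 := by
            intro j _; split <;> simp
          rw [Finset.sum_congr rfl h1, Finset.sum_ite_mem, Finset.mul_sum]
          have hMp : Finset.range m ∩ M p = M p := by
            apply Finset.inter_eq_right.mpr
            intro j hj
            exact Finset.mem_range.mpr (hm p j hj)
          rw [hMp]
      -- now compute Mi (i+1)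
      ext j
      rw [hMi i j, hN]
      simp only [Finset.mem_biUnion, Finset.mem_filter, Finset.mem_univ, true_and]
      constructor
      · rintro ⟨hj, hd⟩
        by_cases hjm : j < m
        · rw [forestNi_digit k hk c hclt m j hjm] at hd
          simp only [hc_def] at hd
          rw [if_neg (by omega), zero_add] at hd
          obtain ⟨p, hp, hpe⟩ := Finset.exists_ne_zero_of_sum_ne_zero hd
          refine ⟨p, hp, ?_⟩
          by_contra hjp
          simp [hjp] at hpe
        · exfalso
          apply hd
          have h1 : ∑ j' ∈ Finset.range m, c j' * k ^ j' < k ^ m :=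
            forestNi_sum_pow_lt k hk c hclt m
          have h2 : (k:ℕ) ^ m ≤ k ^ j := Nat.pow_le_pow_right (by omega) (by omega)
          rw [Nat.div_eq_of_lt (by omega)]
          simp
      · rintro ⟨p, hp, hjp⟩
        have hj : 0 < j := hpos p j hjp
        have hjm : j < m := hm p j hjp
        refine ⟨hj, ?_⟩
        rw [forestNi_digit k hk c hclt m j hjm]
        simp only [hc_def]
        rw [if_neg (by omega), zero_add]
        have hple : p ∈ P := hp
        have hsum : 0 < ∑ p ∈ P, (if j ∈ M p then (C p).card else 0) :=
          Finset.sum_pos' (fun q _ => Nat.zero_le _)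
            ⟨p, hple, by rw [if_pos hjp]; exact hCne p hple⟩
        omega
  -- conclude
  intro i
  have hdiff : Mi i \ Mi (i + 1) = (Finset.univ.filter (fun v => ht v = i)).biUnion M := by
    ext x
    simp only [Finset.mem_sdiff, key i, key (i + 1), Finset.mem_biUnion, Finset.mem_filter,
      Finset.mem_univ, true_and]
    constructor
    · rintro ⟨⟨v, hv, hxv⟩, hnot⟩
      refine ⟨v, ?_, hxv⟩
      by_contra hne
      exact hnot ⟨v, by omega, hxv⟩
    · rintro ⟨v, hv, hxv⟩
      refine ⟨⟨v, by omega, hxv⟩, ?_⟩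
      rintro ⟨w, hw, hxw⟩
      have hne : w ≠ v := fun h => by subst h; omega
      exact (Finset.disjoint_left.mp (hdisj w v hne) hxw) hxv
  refine ⟨hdiff, fun j hj => ?_⟩
  rw [hdiff] at hj
  simp only [Finset.mem_biUnion, Finset.mem_filter, Finset.mem_univ, true_and] at hj
  obtain ⟨v, hv, hjv⟩ := hj
  refine ⟨v, ⟨hv, hjv⟩, ?_⟩
  rintro w ⟨hw, hjw⟩
  by_contra hne
  exact (Finset.disjoint_left.mp (hdisj w v hne) hjw) hjv
end

section
/- Let A be a set of atoms, P a finite set, and D ⊆ (D_A)^P an arbitrary set of P-indexed families of relational points. Call x ∈ D D-atomic if for all substitutions σ : A → D_A and all y ∈ D with σ·y = x (the action applied pointwise), every atom occurring in y is mapped by σ into {+,−}×A. Then for every y ∈ D there exist a D-atomic x ∈ D and a substitution σ : A → D_A with σ·x = y. -/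
/-- Points of the untyped relational model `D_A` over a set `A` of atoms:
base points `(δ, a)` with `a ∈ A`, base points `(δ, *)`, pair points and
finite-multiset points (represented as lists `[α₁,…,α_m]`).
`true` is `+`, `false` is `−`. -/
inductive DA (A : Type) : Type where
  | atom : Bool → A → DA A
  | star : Bool → DA A
  | pair : Bool → DA A → DA A → DA A
  | mset : Bool → List (DA A) → DA A

/-- Duality `α ↦ α^⊥`: flip the polarity at every level. -/
def DA.dual {A : Type} : DA A → DA A
  | .atom b a => .atom (!b) a
  | .star b => .star (!b)
  | .pair b x y => .pair (!b) x.dual y.dual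
  | .mset b l => .mset (!b) (l.attach.map fun x => DA.dual x.1)
decreasing_by
  all_goals first
    | decreasing_trivial
    | (have := List.sizeOf_lt_of_mem x.2; simp_wf; omega)

/-- The action `σ · α` of a substitution `σ : A → D_A` on a point `α ∈ D_A`:
positive atom occurrences `(+, γ)` are replaced by `σ γ`, negative ones `(−, γ)`
by `(σ γ)^⊥`, recursively through pairs and multisets. -/
def DA.subst {A : Type} (σ : A → DA A) : DA A → DA A
  | .atom true a => σ a
  | .atom false a => (σ a).dual
  | .star b => .star b
  | .pair b x y => .pair b (x.subst σ) (y.subst σ)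
  | .mset b l => .mset b (l.attach.map fun x => DA.subst σ x.1)
decreasing_by
  all_goals first
    | decreasing_trivial
    | (have := List.sizeOf_lt_of_mem x.2; simp_wf; omega)

/-- `DA.Occurs γ α`: the atom `γ` occurs in `α`, i.e. `(+, γ)` or `(−, γ)`
appears as a subterm of `α`. -/
inductive DA.Occurs {A : Type} (γ : A) : DA A → Prop where
  | atom (b : Bool) : DA.Occurs γ (.atom b γ)
  | pairL {b : Bool} {x y : DA A} : DA.Occurs γ x → DA.Occurs γ (.pair b x y)
  | pairR {b : Bool} {x y : DA A} : DA.Occurs γ y → DA.Occurs γ (.pair b x y)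
  | mset {b : Bool} {l : List (DA A)} {x : DA A} :
      x ∈ l → DA.Occurs γ x → DA.Occurs γ (.mset b l)

/-- `x ∈ D` is `D`-atomic if whenever `x` is the pointwise substitution
instance `σ · z` of some `z ∈ D`, every atom occurring in `z` is mapped by `σ`
to a point of the form `(δ, a)` with `a ∈ A`. -/
def DA.Atomic {A P : Type} (D : Set (P → DA A)) (x : P → DA A) : Prop :=
  ∀ (σ : A → DA A) (z : P → DA A), z ∈ D → (fun p => DA.subst σ (z p)) = x →
    ∀ γ : A, (∃ p, DA.Occurs γ (z p)) → ∃ (b : Bool) (a : A), σ γ = DA.atom b a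


namespace DA
variable {A : Type}

theorem sum_map_add' {α : Type} (l : List α) (f g : α → ℕ) :
    (l.map (fun a => f a + g a)).sum = (l.map f).sum + (l.map g).sum := by
  induction l with
  | nil => simp
  | cons a l ih => simp [ih]; omega

theorem dual_mset (b : Bool) (l : List (DA A)) :
    DA.dual (.mset b l) = .mset (!b) (l.map DA.dual) := by
  rw [DA.dual]; congr 1; exact List.attach_map_val (l := l) (f := DA.dual)

theorem subst_mset (σ : A → DA A) (b : Bool) (l : List (DA A)) :
    DA.subst σ (.mset b l) = .mset b (l.map (DA.subst σ)) := by
  rw [DA.subst]; congr 1; exact List.attach_map_val (l := l) (f := DA.subst σ)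

/-- number of nodes -/
def size : DA A → ℕ
  | .atom _ _ => 1
  | .star _ => 1
  | .pair _ x y => 1 + x.size + y.size
  | .mset _ l => 1 + (l.attach.map fun x => size x.1).sum
decreasing_by
  all_goals first
    | decreasing_trivial
    | (have := List.sizeOf_lt_of_mem x.2; simp_wf; omega)

/-- number of atom nodes -/
def ac : DA A → ℕ
  | .atom _ _ => 1
  | .star _ => 0
  | .pair _ x y => x.ac + y.ac
  | .mset _ l => (l.attach.map fun x => ac x.1).sum
decreasing_by
  all_goals first
    | decreasing_trivial
    | (have := List.sizeOf_lt_of_mem x.2; simp_wf; omega)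

theorem size_mset (b : Bool) (l : List (DA A)) :
    size (.mset b l) = 1 + (l.map size).sum := by
  rw [size]; congr 2; exact List.attach_map_val (l := l) (f := size)

theorem ac_mset (b : Bool) (l : List (DA A)) :
    ac (.mset b l) = (l.map ac).sum := by
  rw [ac]; exact congrArg _ (List.attach_map_val (l := l) (f := ac))

theorem dual_dual : ∀ x : DA A, x.dual.dual = x
  | .atom b a => by simp [dual]
  | .star b => by simp [dual]
  | .pair b x y => by simp [dual, dual_dual x, dual_dual y]
  | .mset b l => by
    rw [dual_mset, dual_mset, List.map_map, Bool.not_not]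
    conv_rhs => rw [← List.map_id l]
    exact congrArg _ (List.map_congr_left fun a ha => dual_dual a)
decreasing_by
  all_goals first
    | decreasing_trivial
    | (have := List.sizeOf_lt_of_mem ‹_ ∈ _›; simp_wf; omega)

theorem size_dual : ∀ x : DA A, x.dual.size = x.size
  | .atom b a => by simp [dual, size]
  | .star b => by simp [dual, size]
  | .pair b x y => by simp [dual, size, size_dual x, size_dual y]
  | .mset b l => by
    rw [dual_mset, size_mset, size_mset, List.map_map]
    congr 2
    exact List.map_congr_left fun a ha => size_dual a
decreasing_by
  all_goals first
    | decreasing_trivial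
    | (have := List.sizeOf_lt_of_mem ‹_ ∈ _›; simp_wf; omega)

theorem ac_dual : ∀ x : DA A, x.dual.ac = x.ac
  | .atom b a => by simp [dual, ac]
  | .star b => by simp [dual, ac]
  | .pair b x y => by simp [dual, ac, ac_dual x, ac_dual y]
  | .mset b l => by
    rw [dual_mset, ac_mset, ac_mset, List.map_map]
    congr 1
    exact List.map_congr_left fun a ha => ac_dual a
decreasing_by
  all_goals first
    | decreasing_trivial
    | (have := List.sizeOf_lt_of_mem ‹_ ∈ _›; simp_wf; omega)

theorem subst_id : ∀ x : DA A, DA.subst (fun a => .atom true a) x = x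
  | .atom true a => by rw [subst]
  | .atom false a => by rw [subst]; simp [dual]
  | .star b => by rw [subst]
  | .pair b x y => by rw [subst]; simp [subst_id x, subst_id y]
  | .mset b l => by
    rw [subst_mset]
    conv_rhs => rw [← List.map_id l]
    exact congrArg _ (List.map_congr_left fun a ha => subst_id a)
decreasing_by
  all_goals first
    | decreasing_trivial
    | (have := List.sizeOf_lt_of_mem ‹_ ∈ _›; simp_wf; omega)

theorem subst_dual (σ : A → DA A) : ∀ x : DA A, DA.subst σ x.dual = (DA.subst σ x).dual
  | .atom true a => by rw [dual]; simp [subst]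
  | .atom false a => by rw [dual]; simp [subst, dual_dual]
  | .star b => by rw [dual]; simp [subst, dual]
  | .pair b x y => by
    rw [dual]; simp only [subst, dual]
    simp [subst_dual σ x, subst_dual σ y]
  | .mset b l => by
    rw [dual_mset, subst_mset, subst_mset, dual_mset, List.map_map, List.map_map]
    congr 1
    exact List.map_congr_left fun a ha => subst_dual σ a
decreasing_by
  all_goals first
    | decreasing_trivial
    | (have := List.sizeOf_lt_of_mem ‹_ ∈ _›; simp_wf; omega)

theorem subst_subst (σ τ : A → DA A) :
    ∀ x : DA A, DA.subst σ (DA.subst τ x) = DA.subst (fun a => DA.subst σ (τ a)) x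
  | .atom true a => by rw [subst, subst]
  | .atom false a => by rw [subst, subst, subst_dual]
  | .star b => by rw [subst, subst, subst]
  | .pair b x y => by
    rw [subst]; conv_rhs => rw [subst]
    rw [subst]
    simp [subst_subst σ τ x, subst_subst σ τ y]
  | .mset b l => by
    rw [subst_mset, subst_mset, subst_mset, List.map_map]
    congr 1
    exact List.map_congr_left fun a ha => subst_subst σ τ a
decreasing_by
  all_goals first
    | decreasing_trivial
    | (have := List.sizeOf_lt_of_mem ‹_ ∈ _›; simp_wf; omega)

theorem ac_le_size : ∀ x : DA A, x.ac ≤ x.size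
  | .atom _ _ => by simp [ac, size]
  | .star _ => by simp [ac, size]
  | .pair b x y => by
    have := ac_le_size x; have := ac_le_size y
    simp only [ac, size]; omega
  | .mset b l => by
    rw [ac_mset, size_mset]
    have : (l.map ac).sum ≤ (l.map size).sum :=
      List.sum_le_sum fun a ha => ac_le_size a
    omega
decreasing_by
  all_goals first
    | decreasing_trivial
    | (have := List.sizeOf_lt_of_mem ‹_ ∈ _›; simp_wf; omega)

theorem ac_lt_size {x : DA A} (h : ∀ b a, x ≠ .atom b a) : x.ac < x.size := by
  cases x with
  | atom b a => exact absurd rfl (h b a)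
  | star b => simp [ac, size]
  | pair b u v =>
    have := ac_le_size u; have := ac_le_size v
    simp only [ac, size]; omega
  | mset b l =>
    rw [ac_mset, size_mset]
    have : (l.map ac).sum ≤ (l.map size).sum :=
      List.sum_le_sum fun a ha => ac_le_size a
    omega

/-- weak key inequality -/
theorem key (σ : A → DA A) :
    ∀ x : DA A, (DA.subst σ x).ac + x.size ≤ x.ac + (DA.subst σ x).size
  | .atom true a => by
    rw [subst]; have := ac_le_size (σ a); simp only [ac, size]; omega
  | .atom false a => by
    rw [subst]; have := ac_le_size (σ a)
    rw [ac_dual, size_dual]; simp only [ac, size]; omega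
  | .star b => by rw [subst]
  | .pair b x y => by
    have := key σ x; have := key σ y
    rw [subst]; simp only [ac, size]; omega
  | .mset b l => by
    rw [subst_mset, ac_mset, size_mset, ac_mset, size_mset, List.map_map, List.map_map]
    have : (List.map (fun a => (DA.subst σ a).ac + a.size) l).sum ≤
        (List.map (fun a => a.ac + (DA.subst σ a).size) l).sum :=
      List.sum_le_sum fun a ha => key σ a
    rw [sum_map_add', sum_map_add'] at this
    simp only [Function.comp_def]
    omega
decreasing_by
  all_goals first
    | decreasing_trivial
    | (have := List.sizeOf_lt_of_mem ‹_ ∈ _›; simp_wf; omega)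

/-- strict key inequality -/
theorem key_strict {σ : A → DA A} {γ : A} (hγ : ∀ b a, σ γ ≠ .atom b a) :
    ∀ {x : DA A}, Occurs γ x → (DA.subst σ x).ac + x.size < x.ac + (DA.subst σ x).size := by
  intro x h
  induction h with
  | atom b =>
    have h1 := ac_lt_size hγ
    cases b
    · rw [subst, ac_dual, size_dual]; simp only [ac, size]; omega
    · rw [subst]; simp only [ac, size]; omega
  | @pairL b x y hx ih =>
    have := key σ y
    rw [subst]; simp only [ac, size]; omega
  | @pairR b x y hy ih =>
    have := key σ x
    rw [subst]; simp only [ac, size]; omega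
  | @mset b l x hmem hx ih =>
    rw [subst_mset, ac_mset, size_mset, ac_mset, size_mset, List.map_map, List.map_map]
    have : (List.map (fun a => (DA.subst σ a).ac + a.size) l).sum <
        (List.map (fun a => a.ac + (DA.subst σ a).size) l).sum :=
      List.sum_lt_sum _ _ (fun a ha => key σ a) ⟨x, hmem, ih⟩
    rw [sum_map_add', sum_map_add'] at this
    simp only [Function.comp_def]
    omega

end DA

/-- Atomic points are enough: for `P` finite and any `D ⊆ (D_A)^P`, every
`y ∈ D` is a substitution instance of a `D`-atomic `x ∈ D`. -/
theorem DA.atomic_enough (A P : Type) [Fintype P] (D : Set (P → DA A))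
    (y : P → DA A) (hy : y ∈ D) :
    ∃ x ∈ D, DA.Atomic D x ∧ ∃ σ : A → DA A, (fun p => DA.subst σ (x p)) = y := by
  classical
  set μ : (P → DA A) → ℕ := fun x => ∑ p, ((x p).size - (x p).ac) with hμ
  suffices H : ∀ n (y : P → DA A), y ∈ D → μ y = n →
      ∃ x ∈ D, DA.Atomic D x ∧ ∃ σ : A → DA A, (fun p => DA.subst σ (x p)) = y from
    H (μ y) y hy rfl
  clear hy y
  intro n
  induction n using Nat.strong_induction_on with
  | _ n ih =>
  intro y hy hn
  by_cases hat : DA.Atomic D y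
  · exact ⟨y, hy, hat, fun a => .atom true a, funext fun p => DA.subst_id (y p)⟩
  · simp only [DA.Atomic, not_forall] at hat
    obtain ⟨σ, z, hz, hzy, γ, hocc, hbad⟩ := hat
    push_neg at hbad
    obtain ⟨p₀, hp₀⟩ := hocc
    have hle : ∀ p, (z p).size - (z p).ac ≤ (y p).size - (y p).ac := by
      intro p
      have h1 := DA.key σ (z p)
      have h2 := DA.ac_le_size (z p)
      have h3 := DA.ac_le_size (DA.subst σ (z p))
      have h4 : DA.subst σ (z p) = y p := congrFun hzy p
      rw [h4] at h1 h3
      omega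
    have hlt : (z p₀).size - (z p₀).ac < (y p₀).size - (y p₀).ac := by
      have h1 := DA.key_strict hbad hp₀
      have h2 := DA.ac_le_size (z p₀)
      have h3 := DA.ac_le_size (DA.subst σ (z p₀))
      have h4 : DA.subst σ (z p₀) = y p₀ := congrFun hzy p₀
      rw [h4] at h1 h3
      omega
    have hμlt : μ z < n := by
      rw [← hn, hμ]
      exact Finset.sum_lt_sum (fun p _ => hle p) ⟨p₀, Finset.mem_univ _, hlt⟩
    obtain ⟨x, hxD, hxat, σ', hσ'⟩ := ih (μ z) hμlt z hz rfl
    refine ⟨x, hxD, hxat, fun a => DA.subst σ (σ' a), funext fun p => ?_⟩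
    have : DA.subst σ' (x p) = z p := congrFun hσ' p
    rw [DA.subst_subst σ σ' (x p) |>.symm, this]
    exact congrFun hzy p
end
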